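/- arXiv:1410.6400 — 4 statements merged into one kernel-verified Lean document; each statement's English description precedes it below -/
import Mathlib

section
/- Let g : ℕ → ℝ be a nonnegative function and set p(n) := n^{−g(n)}. There exists an absolute constant N ∈ ℕ such that for every n ≥ N and every integer k with 2 ≤ k, k⁴ ≤ n, and g(n)·k⁴ ≤ 1 (i.e. k ≤ min{n^{1/4}, g(n)^{−1/4}}), the probability that the Erdős–Rényi random graph G(n,p(n)) contains no elementary k-clique is at most exp(−n^{1/2}). -/
open MeasureTheory
open scoped Classical
open scoped ENNReal

noncomputable def bernoulliMeasure (p : ℝ) : Measure Bool :=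
  (PMF.bernoulli (min (Real.toNNReal p) 1) (min_le_right _ _)).toMeasure

noncomputable def erdosRenyi (n : ℕ) (p : ℝ) : Measure (Sym2 (Fin n) → Bool) :=
  Measure.pi fun _ => bernoulliMeasure p

def IsCompleteOn {n : ℕ} (ω : Sym2 (Fin n) → Bool) (S : Finset (Fin n)) : Prop :=
  ∀ u ∈ S, ∀ v ∈ S, u ≠ v → ω s(u, v) = true

noncomputable def cliqueCount (n s : ℕ) (ω : Sym2 (Fin n) → Bool) : ℕ :=
  (Finset.univ.filter fun S : Finset (Fin n) => S.card = s ∧ IsCompleteOn ω S).card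

/-- The `j`-th elementary block `{jk, jk+1, …, (j+1)k − 1}` inside `{0,…,n−1}`. -/
def elementaryBlock (n k j : ℕ) : Finset (Fin n) :=
  Finset.univ.filter fun v : Fin n => j * k ≤ (v : ℕ) ∧ (v : ℕ) < (j + 1) * k

/-- A graph (encoded by its edge indicators `ω`) has an elementary `k`-clique if for some
`j ∈ {0,…,⌊n/k⌋−1}` the block `{jk,…,(j+1)k−1}` is complete. -/
def HasElementaryClique (n k : ℕ) (ω : Sym2 (Fin n) → Bool) : Prop :=
  ∃ j < n / k, IsCompleteOn ω (elementaryBlock n k j)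

/-! ### Auxiliary lemmas -/

lemma measurableSet_of_countable' {α : Type*} [MeasurableSpace α] [MeasurableSingletonClass α]
    [Countable α] (s : Set α) : MeasurableSet s := s.to_countable.measurableSet

lemma pi_indep' {ι : Type*} [Fintype ι] (μ : ι → Measure Bool)
    [∀ i, IsProbabilityMeasure (μ i)] (p : ι → Prop)
    (A B : Set (ι → Bool))
    (hA : ∀ ω ω' : ι → Bool, (∀ i, p i → ω i = ω' i) → ω ∈ A → ω' ∈ A)
    (hB : ∀ ω ω' : ι → Bool, (∀ i, ¬ p i → ω i = ω' i) → ω ∈ B → ω' ∈ B) :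
    Measure.pi μ (A ∩ B) = Measure.pi μ A * Measure.pi μ B := by
  classical
  set e := MeasurableEquiv.piEquivPiSubtypeProd (fun _ : ι => Bool) p with he
  have hmp := measurePreserving_piEquivPiSubtypeProd μ p
  set A' : Set ({i // p i} → Bool) :=
    {f | (fun i => if h : p i then f ⟨i, h⟩ else false) ∈ A} with hA'
  set B' : Set ({i // ¬ p i} → Bool) :=
    {f | (fun i => if h : p i then false else f ⟨i, h⟩) ∈ B} with hB'
  have hAeq : A = e ⁻¹' (A' ×ˢ Set.univ) := by
    ext ω
    simp only [Set.mem_preimage, Set.mem_prod, Set.mem_univ, and_true, hA', Set.mem_setOf_eq]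
    constructor
    · intro hω
      exact hA ω _ (fun i hi => by simp [he, MeasurableEquiv.piEquivPiSubtypeProd,
        Equiv.piEquivPiSubtypeProd, hi]) hω
    · intro hω
      refine hA _ ω (fun i hi => by simp [he, MeasurableEquiv.piEquivPiSubtypeProd,
        Equiv.piEquivPiSubtypeProd, hi]) hω
  have hBeq : B = e ⁻¹' (Set.univ ×ˢ B') := by
    ext ω
    simp only [Set.mem_preimage, Set.mem_prod, Set.mem_univ, true_and, hB', Set.mem_setOf_eq]
    constructor
    · intro hω
      exact hB ω _ (fun i hi => by simp [he, MeasurableEquiv.piEquivPiSubtypeProd,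
        Equiv.piEquivPiSubtypeProd, hi]) hω
    · intro hω
      refine hB _ ω (fun i hi => by simp [he, MeasurableEquiv.piEquivPiSubtypeProd,
        Equiv.piEquivPiSubtypeProd, hi]) hω
  rw [hAeq, hBeq, ← Set.preimage_inter, Set.prod_inter_prod, Set.univ_inter, Set.inter_univ,
    hmp.measure_preimage (measurableSet_of_countable' _).nullMeasurableSet,
    hmp.measure_preimage (measurableSet_of_countable' _).nullMeasurableSet,
    hmp.measure_preimage (measurableSet_of_countable' _).nullMeasurableSet,
    Measure.prod_prod, Measure.prod_prod, Measure.prod_prod]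
  simp [measure_univ]

lemma pi_iInter' {ι : Type*} [Fintype ι] (μ : ι → Measure Bool)
    [∀ i, IsProbabilityMeasure (μ i)] (E : ℕ → Set ι) (S : ℕ → Set (ι → Bool)) (m : ℕ)
    (hdisj : ∀ a b, a ≠ b → ∀ i, i ∈ E a → i ∉ E b)
    (hS : ∀ j, ∀ ω ω' : ι → Bool, (∀ i ∈ E j, ω i = ω' i) → ω ∈ S j → ω' ∈ S j) :
    Measure.pi μ (⋂ j ∈ Finset.range m, S j) = ∏ j ∈ Finset.range m, Measure.pi μ (S j) := by
  induction m with
  | zero => simp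
  | succ m ih =>
    rw [Finset.range_add_one, Finset.set_biInter_insert, Finset.prod_insert (by simp),
      Set.inter_comm]
    rw [pi_indep' μ (fun i => i ∉ E m) _ _ ?_ ?_, ih, mul_comm]
    · intro ω ω' hagree hω
      simp only [Set.mem_iInter] at hω ⊢
      intro j hj
      exact hS j ω ω'
        (fun i hi => hagree i (hdisj j m (Nat.ne_of_lt (Finset.mem_range.mp hj)) i hi)) (hω j hj)
    · intro ω ω' hagree hω
      exact hS m ω ω' (fun i hi => hagree i (not_not_intro hi)) hω

lemma pi_allTrue' {ι : Type*} [Fintype ι] (μ : Measure Bool) [IsProbabilityMeasure μ]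
    (E : Finset ι) :
    Measure.pi (fun _ : ι => μ) {ω : ι → Bool | ∀ i ∈ E, ω i = true} = (μ {true}) ^ E.card := by
  have h : {ω : ι → Bool | ∀ i ∈ E, ω i = true}
      = Set.pi Set.univ (fun i => if i ∈ E then ({true} : Set Bool) else Set.univ) := by
    ext ω
    simp only [Set.mem_setOf_eq, Set.mem_pi, Set.mem_univ, forall_true_left]
    constructor
    · intro h i
      split_ifs with hi
      · simpa using h i hi
      · trivial
    · intro h i hi
      have := h i
      rw [if_pos hi] at this
      simpa using this
  rw [h, Measure.pi_pi]
  calc ∏ i : ι, μ (if i ∈ E then ({true} : Set Bool) else Set.univ)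
      = ∏ i : ι, (if i ∈ E then μ {true} else 1) := by
        refine Finset.prod_congr rfl fun i _ => ?_
        split_ifs
        · rfl
        · exact measure_univ
    _ = (μ {true}) ^ E.card := by
        rw [Finset.prod_ite_mem, Finset.univ_inter, Finset.prod_const]

/-- The set of (non-diagonal) edges inside a vertex set `S`. -/
def edgesOf (n : ℕ) (S : Finset (Fin n)) : Finset (Sym2 (Fin n)) :=
  Finset.univ.filter fun z => ¬ z.IsDiag ∧ ∀ x ∈ z, x ∈ S

lemma isCompleteOn_iff_edges {n : ℕ} (ω : Sym2 (Fin n) → Bool) (S : Finset (Fin n)) :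
    IsCompleteOn ω S ↔ ∀ z ∈ edgesOf n S, ω z = true := by
  constructor
  · intro h z hz
    rw [edgesOf, Finset.mem_filter] at hz
    obtain ⟨-, hd, hmem⟩ := hz
    induction z using Sym2.ind with
    | _ x y =>
      refine h x (hmem x (Sym2.mem_mk_left x y)) y (hmem y (Sym2.mem_mk_right x y)) ?_
      intro hxy
      exact hd (by rw [hxy]; exact Sym2.isDiag_iff_proj_eq |>.mpr rfl)
  · intro h u hu v hv huv
    refine h s(u, v) (Finset.mem_filter.2 ⟨Finset.mem_univ _, ?_, ?_⟩)
    · simpa [Sym2.mk_isDiag_iff] using huv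
    · intro x hx
      rcases Sym2.mem_iff.1 hx with rfl | rfl <;> assumption

lemma card_elementaryBlock_le (n k j : ℕ) : (elementaryBlock n k j).card ≤ k := by
  have : (elementaryBlock n k j).card ≤ (Finset.range k).card := by
    refine Finset.card_le_card_of_injOn (fun v => (v : ℕ) - j * k) ?_ ?_
    · intro v hv
      simp only [elementaryBlock, Finset.mem_coe, Finset.mem_filter, Finset.mem_univ, true_and] at hv
      have hjk : (j + 1) * k = j * k + k := by ring
      rw [Finset.mem_coe, Finset.mem_range]
      show (v : ℕ) - j * k < k
      omega
    · intro v hv w hw hvw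
      simp only [elementaryBlock, Finset.mem_coe, Finset.mem_filter, Finset.mem_univ, true_and] at hv hw
      have hvw' : (v : ℕ) - j * k = (w : ℕ) - j * k := by simpa using hvw
      have hjk : (j + 1) * k = j * k + k := by ring
      have : (v : ℕ) = (w : ℕ) := by omega
      exact Fin.ext this
  simpa using this

lemma card_edgesOf_le (n k j : ℕ) :
    (edgesOf n (elementaryBlock n k j)).card ≤ (k + 1).choose 2 := by
  have hsub : edgesOf n (elementaryBlock n k j) ⊆ (elementaryBlock n k j).sym2 := by
    intro z hz
    rw [edgesOf, Finset.mem_filter] at hz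
    exact Finset.mem_sym2_iff.2 hz.2.2
  calc (edgesOf n (elementaryBlock n k j)).card
      ≤ (elementaryBlock n k j).sym2.card := Finset.card_le_card hsub
    _ = ((elementaryBlock n k j).card + 1).choose 2 := Finset.card_sym2 _
    _ ≤ (k + 1).choose 2 :=
        Nat.choose_le_choose 2 (Nat.succ_le_succ (card_elementaryBlock_le n k j))

/-- For `p(n) = n^{−g(n)}` with `g ≥ 0`, there is an absolute constant `N` such
that for all `n ≥ N` and all `k` with `2 ≤ k`, `k⁴ ≤ n` and `g(n)·k⁴ ≤ 1`, the probability
that `G(n, p(n))` contains no elementary `k`-clique is at most `exp(−n^{1/2})`. -/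
theorem erdosRenyi_prob_no_elementaryClique_le_exp
    (g : ℕ → ℝ) (hg : ∀ n, 0 ≤ g n) :
    ∃ N : ℕ, ∀ n ≥ N, ∀ k : ℕ, 2 ≤ k → k ^ 4 ≤ n → g n * (k : ℝ) ^ 4 ≤ 1 →
      erdosRenyi n ((n : ℝ) ^ (-(g n)))
          {ω : Sym2 (Fin n) → Bool | ¬ HasElementaryClique n k ω} ≤
        ENNReal.ofReal (Real.exp (-Real.sqrt n)) := by
  refine ⟨65536, fun n hn k hk2 hk4 hgk => ?_⟩
  have hn0 : 0 < n := by omega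
  have hk0 : 0 < k := by omega
  have hnR : (1 : ℝ) ≤ (n : ℝ) := by exact_mod_cast hn0
  have hnpos : (0 : ℝ) < (n : ℝ) := by positivity
  set c : ℝ := g n with hc
  have hc0 : 0 ≤ c := hg n
  set p : ℝ := (n : ℝ) ^ (-c) with hpdef
  have hp0 : 0 ≤ p := Real.rpow_nonneg (le_of_lt hnpos) _
  have hp1 : p ≤ 1 := Real.rpow_le_one_of_one_le_of_nonpos hnR (neg_nonpos.2 hc0)
  set μ : Measure Bool := bernoulliMeasure p with hμdef
  haveI hμprob : IsProbabilityMeasure μ := PMF.toMeasure.isProbabilityMeasure _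
  have hμtrue : μ {true} = ENNReal.ofReal p := by
    rw [hμdef, bernoulliMeasure, PMF.toMeasure_apply_singleton _ _ (measurableSet_singleton _)]
    rw [PMF.bernoulli_apply]
    simp only [cond_true]
    rw [min_eq_left (Real.toNNReal_le_one.mpr hp1)]
    rfl
  set m : ℕ := n / k with hm
  -- the complete-block events and their coordinate supports
  set C : ℕ → Set (Sym2 (Fin n) → Bool) :=
    fun j => {ω | IsCompleteOn ω (elementaryBlock n k j)} with hC
  set E : ℕ → Set (Sym2 (Fin n)) :=
    fun j => {z | ∀ x ∈ z, x ∈ elementaryBlock n k j} with hE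
  -- rewrite the event
  have hset : {ω : Sym2 (Fin n) → Bool | ¬ HasElementaryClique n k ω}
      = ⋂ j ∈ Finset.range m, (C j)ᶜ := by
    ext ω
    simp only [Set.mem_setOf_eq, HasElementaryClique, not_exists, not_and, Set.mem_iInter,
      Finset.mem_range, Set.mem_compl_iff, hC, Set.mem_setOf_eq, hm]
  have hdisj : ∀ a b : ℕ, a ≠ b → ∀ z, z ∈ E a → z ∉ E b := by
    intro a b hab z hza hzb
    induction z using Sym2.ind with
    | _ x y =>
      have h1 := hza x (Sym2.mem_mk_left x y)
      have h2 := hzb x (Sym2.mem_mk_left x y)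
      simp only [elementaryBlock, Finset.mem_filter, Finset.mem_univ, true_and] at h1 h2
      rcases Nat.lt_or_ge a b with h | h
      · have : (a + 1) * k ≤ b * k := Nat.mul_le_mul_right k h
        omega
      · have hba : b < a := lt_of_le_of_ne h (Ne.symm hab)
        have : (b + 1) * k ≤ a * k := Nat.mul_le_mul_right k hba
        omega
  have hSdep : ∀ j, ∀ ω ω' : Sym2 (Fin n) → Bool,
      (∀ z ∈ E j, ω z = ω' z) → ω ∈ (C j)ᶜ → ω' ∈ (C j)ᶜ := by
    intro j ω ω' hagree hω hω'
    apply hω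
    intro u hu v hv huv
    have hz : s(u, v) ∈ E j := by
      intro x hx
      rcases Sym2.mem_iff.1 hx with rfl | rfl <;> assumption
    rw [hagree _ hz]
    exact hω' u hu v hv huv
  -- independence
  have hprod : erdosRenyi n ((n : ℝ) ^ (-(g n)))
      {ω : Sym2 (Fin n) → Bool | ¬ HasElementaryClique n k ω}
      = ∏ j ∈ Finset.range m, Measure.pi (fun _ : Sym2 (Fin n) => μ) ((C j)ᶜ) := by
    rw [hset]
    exact pi_iInter' (fun _ => μ) E (fun j => (C j)ᶜ) m hdisj hSdep
  -- the measure of a single complete-block event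
  have hCmeas : ∀ j, Measure.pi (fun _ : Sym2 (Fin n) => μ) (C j)
      = (ENNReal.ofReal p) ^ (edgesOf n (elementaryBlock n k j)).card := by
    intro j
    have : C j = {ω : Sym2 (Fin n) → Bool |
        ∀ z ∈ edgesOf n (elementaryBlock n k j), ω z = true} := by
      ext ω
      simp only [hC, Set.mem_setOf_eq]
      exact isCompleteOn_iff_edges ω _
    rw [this, pi_allTrue' μ _, hμtrue]
  -- bound τ
  set τ : ℝ := (n : ℝ) ^ (-(3 / 16 : ℝ)) with hτ
  have hτ0 : 0 ≤ τ := Real.rpow_nonneg (le_of_lt hnpos) _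
  have hτ1 : τ ≤ 1 := Real.rpow_le_one_of_one_le_of_nonpos hnR (by norm_num)
  have hkR : (2 : ℝ) ≤ (k : ℝ) := by exact_mod_cast hk2
  -- the exponent bound : c * e_j ≤ 3/16
  have hexp : ∀ j, c * ((edgesOf n (elementaryBlock n k j)).card : ℝ) ≤ 3 / 16 := by
    intro j
    have he : ((edgesOf n (elementaryBlock n k j)).card : ℝ) ≤ ((k : ℝ) + 1) * k / 2 := by
      have h1 : ((edgesOf n (elementaryBlock n k j)).card : ℝ) ≤ (((k + 1).choose 2 : ℕ) : ℝ) :=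
        by exact_mod_cast card_edgesOf_le n k j
      have h2 : (((k + 1).choose 2 : ℕ) : ℝ) = ((k : ℝ) + 1) * k / 2 := by
        rw [Nat.cast_choose_two]
        push_cast
        ring
      linarith
    have hck4 : c * (k : ℝ) ^ 4 ≤ 1 := hgk
    have hkcube : 8 * ((k : ℝ) + 1) ≤ 3 * (k : ℝ) ^ 3 := by nlinarith
    have hce : c * ((edgesOf n (elementaryBlock n k j)).card : ℝ) ≤ c * (((k : ℝ) + 1) * k / 2) :=
      mul_le_mul_of_nonneg_left he hc0
    have hck : 0 ≤ c * (k : ℝ) := mul_nonneg hc0 (by linarith)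
    have hmain := mul_le_mul_of_nonneg_left hkcube hck
    nlinarith [hmain, hck4, hce]
  -- each factor is at most 1 - ofReal τ
  have hfac : ∀ j, Measure.pi (fun _ : Sym2 (Fin n) => μ) ((C j)ᶜ)
      ≤ 1 - ENNReal.ofReal τ := by
    intro j
    rw [prob_compl_eq_one_sub (measurableSet_of_countable' _), hCmeas j]
    refine tsub_le_tsub_left ?_ 1
    rw [← ENNReal.ofReal_pow hp0]
    apply ENNReal.ofReal_le_ofReal
    have hpe : p ^ (edgesOf n (elementaryBlock n k j)).card
        = (n : ℝ) ^ (-(c * ((edgesOf n (elementaryBlock n k j)).card : ℝ))) := by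
      rw [hpdef, ← Real.rpow_natCast ((n : ℝ) ^ (-c)) _, ← Real.rpow_mul (le_of_lt hnpos)]
      ring_nf
    rw [hpe, hτ]
    exact Real.rpow_le_rpow_of_exponent_le hnR (by linarith [hexp j])
  -- assemble the product bound
  have hμbound : erdosRenyi n ((n : ℝ) ^ (-(g n)))
      {ω : Sym2 (Fin n) → Bool | ¬ HasElementaryClique n k ω}
      ≤ (1 - ENNReal.ofReal τ) ^ m := by
    rw [hprod]
    calc ∏ j ∈ Finset.range m, Measure.pi (fun _ : Sym2 (Fin n) => μ) ((C j)ᶜ)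
        ≤ ∏ _j ∈ Finset.range m, (1 - ENNReal.ofReal τ) :=
          Finset.prod_le_prod' fun j _ => hfac j
      _ = (1 - ENNReal.ofReal τ) ^ m := by rw [Finset.prod_const, Finset.card_range]
  refine le_trans hμbound ?_
  have h1τ : (1 : ℝ≥0∞) - ENNReal.ofReal τ = ENNReal.ofReal (1 - τ) := by
    rw [ENNReal.ofReal_sub _ hτ0, ENNReal.ofReal_one]
  rw [h1τ, ← ENNReal.ofReal_pow (by linarith)]
  apply ENNReal.ofReal_le_ofReal
  -- real analysis: (1 - τ)^m ≤ exp (-√n)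
  have hkey : Real.sqrt n ≤ (m : ℝ) * τ := by
    -- (2k)^16 ≤ n^5
    have hnat : (2 * k) ^ 16 ≤ n ^ 5 := by
      have h1 : (2 * k) ^ 16 = 2 ^ 16 * (k ^ 4) ^ 4 := by ring
      have h2 : (k ^ 4) ^ 4 ≤ n ^ 4 := Nat.pow_le_pow_left hk4 4
      have h3 : 2 ^ 16 ≤ n := hn
      calc (2 * k) ^ 16 = 2 ^ 16 * (k ^ 4) ^ 4 := h1
        _ ≤ n * n ^ 4 := Nat.mul_le_mul h3 h2
        _ = n ^ 5 := by ring
    have h2k0 : (0 : ℝ) < 2 * (k : ℝ) := by linarith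
    have hkn : 2 * (k : ℝ) ≤ (n : ℝ) ^ ((5 : ℝ) / 16) := by
      have h16 : (2 * (k : ℝ)) ^ (16 : ℕ) ≤ (n : ℝ) ^ (5 : ℕ) := by
        exact_mod_cast hnat
      have h := Real.rpow_le_rpow (by positivity) h16 (by norm_num : (0:ℝ) ≤ 1 / 16)
      rw [← Real.rpow_natCast (2 * (k : ℝ)) 16, ← Real.rpow_natCast ((n : ℝ)) 5,
        ← Real.rpow_mul (le_of_lt h2k0), ← Real.rpow_mul (le_of_lt hnpos)] at h
      norm_num at h
      exact h
    -- m ≥ n / (2k)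
    have hmn : (n : ℝ) / (2 * k) ≤ (m : ℝ) := by
      have h1 : 1 ≤ n / k := (Nat.one_le_div_iff hk0).2 (le_trans (Nat.le_self_pow (by norm_num) k) hk4)
      have h2 : n ≤ 2 * (k * (n / k)) := by
        have hmod := Nat.div_add_mod n k
        have hlt : n % k < k := Nat.mod_lt n hk0
        have hk' : k ≤ k * (n / k) := Nat.le_mul_of_pos_right k h1
        omega
      have h2R : (n : ℝ) ≤ 2 * ((k : ℝ) * (m : ℝ)) := by exact_mod_cast h2
      rw [div_le_iff₀ h2k0]
      linarith
    -- n / n^{5/16} * τ = √n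
    have hpow : (n : ℝ) / (n : ℝ) ^ ((5 : ℝ) / 16) * τ = Real.sqrt n := by
      rw [Real.sqrt_eq_rpow, hτ]
      have hdiv : (n : ℝ) / (n : ℝ) ^ ((5 : ℝ) / 16) = (n : ℝ) ^ ((11 : ℝ) / 16) := by
        rw [show ((11 : ℝ) / 16 = 1 - 5 / 16) by norm_num, Real.rpow_sub hnpos, Real.rpow_one]
      rw [hdiv, ← Real.rpow_add hnpos]
      norm_num
    have hstep : (n : ℝ) / (n : ℝ) ^ ((5 : ℝ) / 16) ≤ (n : ℝ) / (2 * k) := by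
      apply div_le_div_of_nonneg_left (le_of_lt hnpos) h2k0 hkn
    calc Real.sqrt n = (n : ℝ) / (n : ℝ) ^ ((5 : ℝ) / 16) * τ := hpow.symm
      _ ≤ (n : ℝ) / (2 * k) * τ := mul_le_mul_of_nonneg_right hstep hτ0
      _ ≤ (m : ℝ) * τ := mul_le_mul_of_nonneg_right hmn hτ0
  calc (1 - τ) ^ m ≤ Real.exp (-τ) ^ m := by
        apply pow_le_pow_left₀ (by linarith)
        nlinarith [Real.add_one_le_exp (-τ)]
    _ = Real.exp (-((m : ℝ) * τ)) := by
        rw [← Real.exp_nat_mul]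
        ring_nf
    _ ≤ Real.exp (-Real.sqrt n) := Real.exp_le_exp.2 (by linarith)
end

section
/- Let g : ℕ → ℝ be a nonnegative function with lim_{n→∞} g(n) = 0, and set p(n) := n^{−g(n)}. Then for every integer k ≥ 2 there exists N ∈ ℕ such that for all n ≥ N, the Erdős–Rényi random graph G(n,p(n)) contains a clique of size k with probability at least 1 − exp(−n^{1/2}). -/
open MeasureTheory
open scoped Classical

open Set
open scoped ENNReal

lemma measurableSet_pi_bool {ι : Type*} [Finite ι] (s : Set (ι → Bool)) :
    MeasurableSet s := by
  have hsingle : ∀ f : ι → Bool, MeasurableSet ({f} : Set (ι → Bool)) := by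
    intro f
    have : ({f} : Set (ι → Bool)) = Set.pi Set.univ (fun i => {f i}) := by
      ext g; simp [funext_iff, Set.mem_pi]
    rw [this]
    exact MeasurableSet.univ_pi fun i => measurableSet_singleton _
  have : s = ⋃ f ∈ s, ({f} : Set (ι → Bool)) := by simp
  rw [this]
  exact MeasurableSet.biUnion (Set.to_countable s) fun f _ => hsingle f

lemma pi_cyl {ι : Type*} [Fintype ι] (ν : Measure Bool) [IsProbabilityMeasure ν]
    (T : Finset ι) :
    Measure.pi (fun _ : ι => ν) {ω | ∀ e ∈ T, ω e = true} = ν {true} ^ T.card := by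
  have h1 : {ω : ι → Bool | ∀ e ∈ T, ω e = true}
      = Set.pi Set.univ (fun e => if e ∈ T then {true} else Set.univ) := by
    ext ω
    simp only [Set.mem_setOf_eq, Set.mem_pi, Set.mem_univ, forall_true_left]
    constructor
    · intro h e; split_ifs with he
      · exact h e he
      · trivial
    · intro h e he; have := h e; rw [if_pos he] at this; exact this
  rw [h1, Measure.pi_pi]
  have : ∀ e : ι, ν (if e ∈ T then ({true} : Set Bool) else Set.univ)
      = if e ∈ T then ν {true} else 1 := by
    intro e; split_ifs with h
    · rfl
    · exact measure_univ
  simp_rw [this]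
  rw [Finset.prod_ite_mem, Finset.univ_inter, Finset.prod_const]

lemma pi_iInter_blocks (ν : Measure Bool) [IsProbabilityMeasure ν] :
    ∀ (m : ℕ) (ι : Type) [Fintype ι] (E : Fin m → Finset ι)
      (_hdisj : ∀ i j, i ≠ j → Disjoint (E i) (E j))
      (B : Fin m → Set (ι → Bool))
      (_hdep : ∀ i (ω ω' : ι → Bool), (∀ e ∈ E i, ω e = ω' e) → ω ∈ B i → ω' ∈ B i),
      Measure.pi (fun _ : ι => ν) (⋂ i, B i) = ∏ i, Measure.pi (fun _ : ι => ν) (B i) := by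
  intro m
  induction m with
  | zero =>
    intro ι _ E _ B _
    simp [Set.iInter_of_empty]
  | succ m ih =>
    intro ι _ E hdisj B hdep
    set p : ι → Prop := fun e => e ∈ E 0 with hp
    letI : Fintype {x : ι // p x} := Subtype.fintype p
    letI : Fintype {x : ι // ¬ p x} := Subtype.fintype _
    set e : (ι → Bool) ≃ᵐ ({x // p x} → Bool) × ({x // ¬p x} → Bool) :=
      MeasurableEquiv.piEquivPiSubtypeProd (fun _ : ι => Bool) p with he
    have hmp := measurePreserving_piEquivPiSubtypeProd (fun _ : ι => (ν : Measure Bool)) p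
    set μ : Measure (ι → Bool) := Measure.pi (fun _ : ι => ν) with hμ
    set ν₁ : Measure ({x // p x} → Bool) := Measure.pi (fun _ => ν) with hν₁
    set ν₂ : Measure ({x // ¬p x} → Bool) := Measure.pi (fun _ => ν) with hν₂
    have hmp' : MeasurePreserving (⇑e) μ (ν₁.prod ν₂) := by
      rw [hμ, hν₁, hν₂, he]
      exact measurePreserving_piEquivPiSubtypeProd (fun _ : ι => (ν : Measure Bool)) p
    have key : ∀ S : Set (ι → Bool), μ S = (ν₁.prod ν₂) (e.symm ⁻¹' S) := by
      intro S
      rw [← hmp'.map_eq, e.map_apply]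
      congr 1
      ext ω
      simp
    -- fill functions
    have hesymm : ∀ (x : {x // p x} → Bool) (y : {x // ¬p x} → Bool) (i : ι),
        e.symm (x, y) i = if h : p i then x ⟨i, h⟩ else y ⟨i, h⟩ := by
      intro x y i
      rfl
    set fill : ({x // p x} → Bool) → ({x // ¬p x} → Bool) → (ι → Bool) :=
      fun x y i => if h : p i then x ⟨i, h⟩ else y ⟨i, h⟩ with hfill
    set T₁ : Set ({x // p x} → Bool) := {x | fill x (fun _ => false) ∈ B 0} with hT₁
    set B' : Fin m → Set ({x // ¬p x} → Bool) :=
      fun i => {y | fill (fun _ => false) y ∈ B i.succ} with hB'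
    set E' : Fin m → Finset {x // ¬p x} :=
      fun i => Finset.univ.filter (fun x => (x : ι) ∈ E i.succ) with hE'
    -- coordinates of E i.succ are not in E 0
    have hnotp : ∀ (i : Fin m) (c : ι), c ∈ E i.succ → ¬ p c := by
      intro i c hc hpc
      exact Finset.disjoint_left.mp (hdisj 0 i.succ (Fin.succ_ne_zero i).symm) hpc hc
    have hB0iff : ∀ (x : {x // p x} → Bool) (y : {x // ¬p x} → Bool),
        (e.symm (x, y) ∈ B 0 ↔ x ∈ T₁) := by
      intro x y
      have hagree : ∀ c ∈ E 0, e.symm (x, y) c = fill x (fun _ => false) c := by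
        intro c hc
        rw [hesymm, hfill]
        simp only [dif_pos (show p c from hc)]
      exact ⟨fun h => hdep 0 _ _ hagree h,
        fun h => hdep 0 _ _ (fun c hc => (hagree c hc).symm) h⟩
    have hBsucciff : ∀ (i : Fin m) (x : {x // p x} → Bool) (y : {x // ¬p x} → Bool),
        (e.symm (x, y) ∈ B i.succ ↔ y ∈ B' i) := by
      intro i x y
      have hagree : ∀ c ∈ E i.succ, e.symm (x, y) c = fill (fun _ => false) y c := by
        intro c hc
        rw [hesymm, hfill]
        simp only [dif_neg (hnotp i c hc)]
      exact ⟨fun h => hdep i.succ _ _ hagree h,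
        fun h => hdep i.succ _ _ (fun c hc => (hagree c hc).symm) h⟩
    have hsplit : e.symm ⁻¹' (⋂ i, B i) = T₁ ×ˢ (⋂ i, B' i) := by
      ext ⟨x, y⟩
      simp only [Set.mem_preimage, Set.mem_iInter, Set.mem_prod, Fin.forall_fin_succ]
      constructor
      · rintro ⟨h0, hs⟩
        exact ⟨(hB0iff x y).mp h0, fun i => (hBsucciff i x y).mp (hs i)⟩
      · rintro ⟨h0, hs⟩
        exact ⟨(hB0iff x y).mpr h0, fun i => (hBsucciff i x y).mpr (hs i)⟩
    have hB0meas : μ (B 0) = ν₁ T₁ := by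
      have : e.symm ⁻¹' (B 0) = T₁ ×ˢ (Set.univ : Set ({x // ¬p x} → Bool)) := by
        ext ⟨x, y⟩
        simp only [Set.mem_preimage, Set.mem_prod, Set.mem_univ, and_true]
        exact hB0iff x y
      rw [key, this, Measure.prod_prod, measure_univ, mul_one]
    have hBsuccmeas : ∀ i : Fin m, μ (B i.succ) = ν₂ (B' i) := by
      intro i
      have : e.symm ⁻¹' (B i.succ) = (Set.univ : Set ({x // p x} → Bool)) ×ˢ B' i := by
        ext ⟨x, y⟩
        simp only [Set.mem_preimage, Set.mem_prod, Set.mem_univ, true_and]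
        exact hBsucciff i x y
      rw [key, this, Measure.prod_prod, measure_univ, one_mul]
    have hih : ν₂ (⋂ i, B' i) = ∏ i, ν₂ (B' i) := by
      refine ih {x // ¬p x} E' ?_ B' ?_
      · intro i j hij
        have := hdisj i.succ j.succ (fun h => hij (Fin.succ_injective _ h))
        rw [Finset.disjoint_left] at this ⊢
        intro a ha ha'
        rw [hE'] at ha ha'
        simp only [Finset.mem_filter, Finset.mem_univ, true_and] at ha ha'
        exact this ha ha'
      · intro i y y' hagree hy
        refine hdep i.succ _ _ ?_ hy
        intro c hc
        rw [hfill]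
        simp only [dif_neg (hnotp i c hc)]
        have : (⟨c, hnotp i c hc⟩ : {x // ¬p x}) ∈ E' i := by
          rw [hE']; simp [hc]
        exact hagree _ this
    rw [key, hsplit, Measure.prod_prod, hih, Fin.prod_univ_succ, hB0meas]
    congr 1
    exact Finset.prod_congr rfl fun i _ => (hBsuccmeas i).symm

/-- If `g ≥ 0` tends to `0` and `p(n) = n^{−g(n)}`, then for every `k ≥ 2`
there is `N` such that for all `n ≥ N`, the random graph `G(n, p(n))` contains a clique of
size `k` with probability at least `1 − exp(−n^{1/2})`. -/
theorem erdosRenyi_clique_whp_of_tendsto_zero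
    (g : ℕ → ℝ) (hg : ∀ n, 0 ≤ g n)
    (hlim : Filter.Tendsto g Filter.atTop (nhds 0))
    (k : ℕ) (hk : 2 ≤ k) :
    ∃ N : ℕ, ∀ n ≥ N,
      ENNReal.ofReal (1 - Real.exp (-Real.sqrt n)) ≤
        erdosRenyi n ((n : ℝ) ^ (-(g n)))
          {ω : Sym2 (Fin n) → Bool |
            ∃ S : Finset (Fin n), S.card = k ∧ IsCompleteOn ω S} := by
  have hk0 : 0 < k := by omega
  have hε : (0:ℝ) < 1 / (4 * (k:ℝ)^2) := by positivity
  obtain ⟨N₁, hN₁⟩ := (Metric.tendsto_atTop.mp hlim) _ hε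
  refine ⟨max N₁ ((2*k)^4), fun n hn => ?_⟩
  have hnN₁ : N₁ ≤ n := le_trans (le_max_left _ _) hn
  have hn4 : (2*k)^4 ≤ n := le_trans (le_max_right _ _) hn
  have h2k : 2*k ≤ n := le_trans (Nat.le_self_pow (by norm_num) _) hn4
  have hn1 : 1 ≤ n := by omega
  have hgε : g n ≤ 1 / (4*(k:ℝ)^2) := by
    have := hN₁ n hnN₁
    rw [Real.dist_eq, sub_zero, abs_of_nonneg (hg n)] at this
    exact this.le
  set p : ℝ := (n:ℝ) ^ (-(g n)) with hpdef
  have hn0R : (0:ℝ) < n := by exact_mod_cast Nat.lt_of_lt_of_le Nat.zero_lt_one hn1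
  have hn1R : (1:ℝ) ≤ n := by exact_mod_cast hn1
  have hp0 : 0 < p := Real.rpow_pos_of_pos hn0R _
  have hp1 : p ≤ 1 := Real.rpow_le_one_of_one_le_of_nonpos hn1R (neg_nonpos.mpr (hg n))
  haveI hbprob : IsProbabilityMeasure (bernoulliMeasure p) := by
    unfold bernoulliMeasure; infer_instance
  haveI : IsProbabilityMeasure (erdosRenyi n p) := by
    unfold erdosRenyi; infer_instance
  have hνt : bernoulliMeasure p {true} = ENNReal.ofReal p := by
    unfold bernoulliMeasure
    rw [PMF.toMeasure_apply_singleton _ _ (measurableSet_singleton _), PMF.bernoulli_apply]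
    simp [min_eq_left (Real.toNNReal_le_one.mpr hp1), ENNReal.ofReal]
  set m : ℕ := n / k with hm
  -- blocks
  have hblt : ∀ (i : Fin m) (j : Fin k), i.1 * k + j.1 < n := by
    intro i j
    calc i.1 * k + j.1 < i.1 * k + k := by omega
    _ = (i.1+1) * k := by ring
    _ ≤ m * k := Nat.mul_le_mul_right k i.2
    _ ≤ n := Nat.div_mul_le_self n k
  set blk : Fin m → Finset (Fin n) :=
    fun i => Finset.univ.image (fun j : Fin k => (⟨i.1*k+j.1, hblt i j⟩ : Fin n)) with hblk
  have hblkcard : ∀ i, (blk i).card = k := by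
    intro i
    rw [hblk, Finset.card_image_of_injective _ ?_, Finset.card_univ, Fintype.card_fin]
    intro a b hab
    apply Fin.ext
    have : i.1 * k + a.1 = i.1 * k + b.1 := congrArg Fin.val hab
    omega
  have hblkmem : ∀ (i : Fin m) (v : Fin n), v ∈ blk i →
      i.1 * k ≤ v.1 ∧ v.1 < (i.1+1)*k := by
    intro i v hv
    rw [hblk] at hv
    obtain ⟨j, _, rfl⟩ := Finset.mem_image.mp hv
    refine ⟨Nat.le_add_right _ _, ?_⟩
    show i.1*k + j.1 < (i.1+1)*k
    have hj : j.1 < k := j.2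
    calc i.1*k + j.1 < i.1*k + k := Nat.add_lt_add_left hj _
      _ = (i.1+1)*k := (Nat.succ_mul i.1 k).symm
  have hblkdisj : ∀ i j : Fin m, i ≠ j → Disjoint (blk i) (blk j) := by
    intro i j hij
    rw [Finset.disjoint_left]
    intro v hvi hvj
    obtain ⟨h1, h2⟩ := hblkmem i v hvi
    obtain ⟨h3, h4⟩ := hblkmem j v hvj
    apply hij
    apply Fin.ext
    rcases Nat.lt_trichotomy i.1 j.1 with h | h | h
    · have hh : (i.1+1) * k ≤ j.1 * k := Nat.mul_le_mul_right k h
      exact absurd (lt_of_lt_of_le h2 (hh.trans h3)) (lt_irrefl _)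
    · exact h
    · have hh : (j.1+1) * k ≤ i.1 * k := Nat.mul_le_mul_right k h
      exact absurd (lt_of_lt_of_le h4 (hh.trans h1)) (lt_irrefl _)
  -- edge sets
  set E : Fin m → Finset (Sym2 (Fin n)) :=
    fun i => ((blk i ×ˢ blk i).filter fun q => q.1 ≠ q.2).image fun q => s(q.1, q.2) with hE
  have hEmem : ∀ (i : Fin m) (u v : Fin n), u ∈ blk i → v ∈ blk i → u ≠ v →
      s(u, v) ∈ E i := by
    intro i u v hu hv huv
    rw [hE]
    exact Finset.mem_image.mpr ⟨(u, v),
      Finset.mem_filter.mpr ⟨Finset.mem_product.mpr ⟨hu, hv⟩, huv⟩, rfl⟩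
  have hEdisj : ∀ i j : Fin m, i ≠ j → Disjoint (E i) (E j) := by
    intro i j hij
    rw [Finset.disjoint_left]
    intro a hai haj
    rw [hE] at hai haj
    obtain ⟨⟨u, v⟩, huv, rfl⟩ := Finset.mem_image.mp hai
    obtain ⟨⟨u', v'⟩, huv', heq⟩ := Finset.mem_image.mp haj
    obtain ⟨hu, hv⟩ := Finset.mem_product.mp (Finset.mem_filter.mp huv).1
    obtain ⟨hu', hv'⟩ := Finset.mem_product.mp (Finset.mem_filter.mp huv').1
    have : u' = u ∧ v' = v ∨ u' = v ∧ v' = u := Sym2.eq_iff.mp heq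
    have hu2 : u ∈ blk j := by
      rcases this with ⟨h1, h2⟩ | ⟨h1, h2⟩
      · exact h1 ▸ hu'
      · exact h2 ▸ hv'
    exact Finset.disjoint_left.mp (hblkdisj i j hij) hu hu2
  have hEcard : ∀ i, (E i).card ≤ k^2 := by
    intro i
    calc (E i).card ≤ ((blk i ×ˢ blk i).filter fun q => q.1 ≠ q.2).card :=
          Finset.card_image_le
      _ ≤ (blk i ×ˢ blk i).card := Finset.card_filter_le _ _
      _ = k * k := by rw [Finset.card_product, hblkcard]
      _ = k^2 := by ring
  -- events
  set A : Fin m → Set (Sym2 (Fin n) → Bool) :=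
    fun i => {ω | ∀ e ∈ E i, ω e = true} with hA
  have hAmeas : ∀ i, erdosRenyi n p (A i) = ENNReal.ofReal p ^ (E i).card := by
    intro i
    rw [show erdosRenyi n p = Measure.pi fun _ => bernoulliMeasure p from rfl,
      hA, pi_cyl, hνt]
  set qr : ℝ := p ^ (k^2) with hqr
  have hqr0 : 0 < qr := pow_pos hp0 _
  have hqr1 : qr ≤ 1 := pow_le_one₀ hp0.le hp1
  have hAge : ∀ i, ENNReal.ofReal qr ≤ erdosRenyi n p (A i) := by
    intro i
    rw [hAmeas i, hqr, ENNReal.ofReal_pow hp0.le]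
    exact pow_le_pow_right_of_le_one' (ENNReal.ofReal_le_one.mpr hp1) (hEcard i)
  -- independence
  have hIndep : erdosRenyi n p (⋂ i, (A i)ᶜ) = ∏ i, erdosRenyi n p ((A i)ᶜ) := by
    rw [show erdosRenyi n p = Measure.pi fun _ => bernoulliMeasure p from rfl]
    refine pi_iInter_blocks (bernoulliMeasure p) m (Sym2 (Fin n)) E hEdisj _ ?_
    intro i ω ω' hag hω hω'
    apply hω
    intro e he
    rw [hag e he]
    exact hω' e he
  have hAcompl : ∀ i, erdosRenyi n p ((A i)ᶜ) ≤ 1 - ENNReal.ofReal qr := by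
    intro i
    rw [prob_compl_eq_one_sub (measurableSet_pi_bool _)]
    exact tsub_le_tsub_left (hAge i) 1
  have hprod : erdosRenyi n p (⋂ i, (A i)ᶜ) ≤ (1 - ENNReal.ofReal qr) ^ m := by
    rw [hIndep]
    calc ∏ i, erdosRenyi n p ((A i)ᶜ) ≤ ∏ _i : Fin m, (1 - ENNReal.ofReal qr) :=
          Finset.prod_le_prod' fun i _ => hAcompl i
      _ = (1 - ENNReal.ofReal qr) ^ m := by
          rw [Finset.prod_const, Finset.card_univ, Fintype.card_fin]
  -- analytic bound : sqrt n ≤ m * qr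
  have h2kR : (0:ℝ) < 2*k := by positivity
  have hn14 : 2*(k:ℝ) ≤ (n:ℝ) ^ ((1:ℝ)/4) := by
    have h1 : ((2*k:ℕ):ℝ)^(4:ℕ) ≤ (n:ℝ) := by exact_mod_cast hn4
    have h2 : (((2*k:ℕ):ℝ)^(4:ℕ)) ^ ((1:ℝ)/4) ≤ (n:ℝ) ^ ((1:ℝ)/4) :=
      Real.rpow_le_rpow (by positivity) h1 (by norm_num)
    calc 2*(k:ℝ) = (((2*k:ℕ):ℝ)^(4:ℕ)) ^ ((1:ℝ)/4) := by
          rw [← Real.rpow_natCast ((2*k:ℕ):ℝ) 4, ← Real.rpow_mul (by positivity)]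
          push_cast
          norm_num
      _ ≤ _ := h2
  have hqrge : (n:ℝ) ^ (-(1:ℝ)/4) ≤ qr := by
    have h1 : qr = (n:ℝ) ^ ((-(g n)) * ((k^2 : ℕ):ℝ)) := by
      rw [hqr, hpdef, ← Real.rpow_natCast ((n:ℝ) ^ (-(g n))) (k^2),
        ← Real.rpow_mul hn0R.le]
    rw [h1]
    apply Real.rpow_le_rpow_of_exponent_le hn1R
    have hk2 : (0:ℝ) < (k:ℝ)^2 := by positivity
    have : g n * (k:ℝ)^2 ≤ 1/4 := by
      have := mul_le_mul_of_nonneg_right hgε hk2.le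
      calc g n * (k:ℝ)^2 ≤ 1 / (4*(k:ℝ)^2) * (k:ℝ)^2 := this
        _ = 1/4 := by
            rw [one_div, mul_inv, mul_assoc, inv_mul_cancel₀ hk2.ne', mul_one]
            norm_num
    push_cast
    nlinarith
  have hkm : (n:ℝ) - k ≤ (k:ℝ) * m := by
    have h1 : k * m + n % k = n := Nat.div_add_mod n k
    have h2 : n % k < k := Nat.mod_lt _ hk0
    have h1R : (k:ℝ) * m + ((n % k : ℕ):ℝ) = n := by exact_mod_cast h1
    have h2R : ((n % k : ℕ):ℝ) < k := by exact_mod_cast h2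
    linarith
  have hmge : (n:ℝ)/(2*k) ≤ (m:ℝ) := by
    rw [div_le_iff₀ h2kR]
    have h2kn : (2*(k:ℝ)) ≤ n := by exact_mod_cast h2k
    nlinarith
  have hsqrt : Real.sqrt n ≤ (m:ℝ) * qr := by
    have hstep : Real.sqrt n ≤ ((n:ℝ)/(2*k)) * ((n:ℝ) ^ (-(1:ℝ)/4)) := by
      have hrw : ((n:ℝ)/(2*k)) * ((n:ℝ) ^ (-(1:ℝ)/4)) = (n:ℝ) ^ ((3:ℝ)/4) / (2*k) := by
        rw [show ((3:ℝ)/4) = 1 + (-(1:ℝ)/4) by norm_num, Real.rpow_add hn0R,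
          Real.rpow_one]
        ring
      rw [hrw, le_div_iff₀ h2kR, Real.sqrt_eq_rpow,
        show ((3:ℝ)/4) = 1/2 + 1/4 by norm_num, Real.rpow_add hn0R]
      calc (n:ℝ)^((1:ℝ)/2) * (2*k) ≤ (n:ℝ)^((1:ℝ)/2) * (n:ℝ)^((1:ℝ)/4) := by
            apply mul_le_mul_of_nonneg_left _ (Real.rpow_nonneg hn0R.le _)
            exact hn14
        _ = _ := rfl
    calc Real.sqrt n ≤ ((n:ℝ)/(2*k)) * ((n:ℝ) ^ (-(1:ℝ)/4)) := hstep
      _ ≤ (m:ℝ) * qr := by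
          apply mul_le_mul hmge hqrge (Real.rpow_nonneg hn0R.le _)
          exact Nat.cast_nonneg m
  -- real inequality
  have hreal : (1 - qr)^m ≤ Real.exp (-Real.sqrt n) := by
    have h1 : (1 - qr)^m ≤ (Real.exp (-qr))^m := by
      apply pow_le_pow_left₀ (by linarith)
      linarith [Real.add_one_le_exp (-qr)]
    have h2 : (Real.exp (-qr))^m = Real.exp ((m:ℝ) * (-qr)) := (Real.exp_nat_mul _ _).symm
    rw [h2] at h1
    refine h1.trans (Real.exp_le_exp.mpr ?_)
    nlinarith
  -- ENNReal bound
  have hENN : (1 - ENNReal.ofReal qr) ^ m ≤ ENNReal.ofReal (Real.exp (-Real.sqrt n)) := by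
    have h1 : (1 : ℝ≥0∞) - ENNReal.ofReal qr = ENNReal.ofReal (1 - qr) := by
      rw [ENNReal.ofReal_sub _ hqr0.le, ENNReal.ofReal_one]
    rw [h1, ← ENNReal.ofReal_pow (by linarith)]
    exact ENNReal.ofReal_le_ofReal hreal
  -- union bound
  have hsub : (⋃ i, A i) ⊆
      {ω : Sym2 (Fin n) → Bool | ∃ S : Finset (Fin n), S.card = k ∧ IsCompleteOn ω S} := by
    intro ω hω
    obtain ⟨i, hi⟩ := Set.mem_iUnion.mp hω
    refine ⟨blk i, hblkcard i, ?_⟩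
    intro u hu v hv huv
    exact hi s(u, v) (hEmem i u v hu hv huv)
  have hunion : erdosRenyi n p (⋃ i, A i) = 1 - erdosRenyi n p (⋂ i, (A i)ᶜ) := by
    have h1 : (⋃ i, A i) = (⋂ i, (A i)ᶜ)ᶜ := by
      simp [Set.compl_iInter]
    rw [h1, prob_compl_eq_one_sub (measurableSet_pi_bool _)]
  calc ENNReal.ofReal (1 - Real.exp (-Real.sqrt n))
      = 1 - ENNReal.ofReal (Real.exp (-Real.sqrt n)) := by
        rw [ENNReal.ofReal_sub _ (Real.exp_nonneg _), ENNReal.ofReal_one]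
    _ ≤ 1 - (1 - ENNReal.ofReal qr) ^ m := tsub_le_tsub_left hENN 1
    _ ≤ 1 - erdosRenyi n p (⋂ i, (A i)ᶜ) := tsub_le_tsub_left hprod 1
    _ = erdosRenyi n p (⋃ i, A i) := (hunion).symm
    _ ≤ _ := measure_mono hsub
end

section
/- Let c > 0 be a real number, let g : ℕ → ℝ be a nonnegative function, set p(n) := n^{−g(n)}, and let s₀ := 2⌈4/c⌉ + 1. Then for every integer n ≥ 1 with g(n) ≥ c/2 and every integer s ≥ s₀, the expected number of cliques of size s in the Erdős–Rényi random graph G(n,p(n)) is at most n^{−3}. -/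
open MeasureTheory
open scoped Classical

instance (p : ℝ) : IsProbabilityMeasure (bernoulliMeasure p) :=
  PMF.toMeasure.isProbabilityMeasure _

instance (n : ℕ) (p : ℝ) : IsProbabilityMeasure (erdosRenyi n p) :=
  MeasureTheory.Measure.pi.instIsProbabilityMeasure _

lemma bernoulliMeasure_true (p : ℝ) :
    bernoulliMeasure p {true} = min (ENNReal.ofReal p) 1 := by
  rw [bernoulliMeasure, PMF.toMeasure_apply_singleton _ _ (measurableSet_singleton _)]
  simp [PMF.bernoulli, ENNReal.coe_min, ENNReal.ofReal]

lemma measure_isCompleteOn (n : ℕ) (p : ℝ) (S : Finset (Fin n)) :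
    erdosRenyi n p {ω | IsCompleteOn ω S} =
      (min (ENNReal.ofReal p) 1) ^ (S.card.choose 2) := by
  classical
  set E : Finset (Sym2 (Fin n)) := S.offDiag.image Sym2.mk.uncurry with hE
  have hset : {ω : Sym2 (Fin n) → Bool | IsCompleteOn ω S} =
      Set.pi Set.univ (fun e => if e ∈ E then ({true} : Set Bool) else Set.univ) := by
    ext ω
    simp only [Set.mem_setOf_eq, Set.mem_pi, Set.mem_univ, forall_true_left]
    constructor
    · intro h e
      split_ifs with he
      · obtain ⟨⟨u, v⟩, huv, rfl⟩ := Finset.mem_image.mp he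
        obtain ⟨hu, hv, hne⟩ := Finset.mem_offDiag.mp huv
        exact h u hu v hv hne
      · trivial
    · intro h u hu v hv hne
      have he : s(u, v) ∈ E :=
        Finset.mem_image.mpr ⟨(u, v), Finset.mem_offDiag.mpr ⟨hu, hv, hne⟩, rfl⟩
      have := h s(u, v)
      rwa [if_pos he] at this
  rw [hset, erdosRenyi, Measure.pi_pi]
  have : ∀ e ∈ Finset.univ, bernoulliMeasure p (if e ∈ E then ({true} : Set Bool) else Set.univ)
      = if e ∈ E then min (ENNReal.ofReal p) 1 else 1 := by
    intro e _
    split_ifs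
    · exact bernoulliMeasure_true p
    · exact measure_univ
  rw [Finset.prod_congr rfl this, Finset.prod_ite_mem, Finset.univ_inter,
    Finset.prod_const, Sym2.card_image_offDiag]

/-- Let `c > 0`, `g ≥ 0`, `p(n) = n^{−g(n)}`, and `s₀ := 2⌈4/c⌉ + 1`. Then for
every `n ≥ 1` with `g(n) ≥ c/2` and every `s ≥ s₀`, the expected number of cliques of size
`s` in `G(n, p(n))` is at most `n^{−3}`. -/
theorem erdosRenyi_expected_cliqueCount_le_of_large_size
    (c : ℝ) (hc : 0 < c) (g : ℕ → ℝ) (hg : ∀ m, 0 ≤ g m)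
    (s₀ : ℕ) (hs₀ : s₀ = 2 * ⌈(4 : ℝ) / c⌉₊ + 1)
    (n : ℕ) (hn : 1 ≤ n) (hgn : c / 2 ≤ g n) (s : ℕ) (hs : s₀ ≤ s) :
    ∫ ω, (cliqueCount n s ω : ℝ) ∂ erdosRenyi n ((n : ℝ) ^ (-(g n))) ≤
      (n : ℝ) ^ (-3 : ℝ) := by
  classical
  set p : ℝ := (n : ℝ) ^ (-(g n)) with hp
  have hn1 : (1 : ℝ) ≤ (n : ℝ) := by exact_mod_cast hn
  have hn0 : (0 : ℝ) < (n : ℝ) := lt_of_lt_of_le zero_lt_one hn1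
  have hp0 : 0 ≤ p := Real.rpow_nonneg (le_of_lt hn0) _
  set μ := erdosRenyi n p with hμ
  set T : Finset (Finset (Fin n)) :=
    Finset.univ.filter (fun S : Finset (Fin n) => S.card = s) with hT
  set q : ℝ := (min (ENNReal.ofReal p) 1).toReal with hq
  have hqp : q ≤ p := by
    rw [hq]
    calc (min (ENNReal.ofReal p) 1).toReal ≤ (ENNReal.ofReal p).toReal := by
          apply ENNReal.toReal_mono ENNReal.ofReal_ne_top (min_le_left _ _)
      _ = p := ENNReal.toReal_ofReal hp0
  have hq0 : 0 ≤ q := ENNReal.toReal_nonneg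
  have hcount : ∀ ω : Sym2 (Fin n) → Bool, (cliqueCount n s ω : ℝ) =
      ∑ S ∈ T, (if IsCompleteOn ω S then (1 : ℝ) else 0) := by
    intro ω
    rw [Finset.sum_boole, hT, Finset.filter_filter, cliqueCount]
  have hInt : ∀ S ∈ T, Integrable
      (fun ω : Sym2 (Fin n) → Bool => (if IsCompleteOn ω S then (1 : ℝ) else 0)) μ :=
    fun S _ => Integrable.of_finite
  have step1 : ∫ ω, (cliqueCount n s ω : ℝ) ∂μ
      = ∑ S ∈ T, (μ {ω | IsCompleteOn ω S}).toReal := by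
    simp only [hcount]
    rw [integral_finset_sum T hInt]
    refine Finset.sum_congr rfl fun S _ => ?_
    have hfin : MeasurableSet {ω : Sym2 (Fin n) → Bool | IsCompleteOn ω S} :=
      (Set.toFinite _).measurableSet
    have heq : (fun ω : Sym2 (Fin n) → Bool => (if IsCompleteOn ω S then (1 : ℝ) else 0))
        = Set.indicator {ω | IsCompleteOn ω S} 1 := by
      ext ω; simp [Set.indicator_apply]
    rw [heq, integral_indicator_one hfin, measureReal_def]
  have step2 : ∀ S ∈ T, (μ {ω | IsCompleteOn ω S}).toReal = q ^ (s.choose 2) := by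
    intro S hS
    have hcard : S.card = s := (Finset.mem_filter.mp hS).2
    rw [hμ, measure_isCompleteOn, hcard, ENNReal.toReal_pow, hq]
  have hTcard : T.card = n.choose s := by
    rw [hT, ← Finset.powerset_univ, ← Finset.powersetCard_eq_filter,
      Finset.card_powersetCard, Finset.card_univ, Fintype.card_fin]
  have step3 : ∫ ω, (cliqueCount n s ω : ℝ) ∂μ = (n.choose s : ℝ) * q ^ (s.choose 2) := by
    rw [step1, Finset.sum_congr rfl step2, Finset.sum_const, hTcard, nsmul_eq_mul]
  rw [step3]
  -- numeric facts about s
  have hk : ((4 : ℝ) / c) ≤ (⌈(4 : ℝ) / c⌉₊ : ℝ) := Nat.le_ceil _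
  have hk1 : 1 ≤ ⌈(4 : ℝ) / c⌉₊ := by
    apply Nat.one_le_ceil_iff.mpr
    positivity
  have hs3 : 3 ≤ s := by omega
  have hsR : (2 * (⌈(4 : ℝ) / c⌉₊ : ℝ) + 1) ≤ (s : ℝ) := by
    have : ((s₀ : ℕ) : ℝ) ≤ (s : ℝ) := by exact_mod_cast hs
    rw [hs₀] at this
    push_cast at this
    linarith
  have hs3R : (3 : ℝ) ≤ (s : ℝ) := by exact_mod_cast hs3
  -- key exponent inequality
  have hgn0 : 0 ≤ g n := hg n
  have hexp : (s : ℝ) - g n * ((s : ℝ) * ((s : ℝ) - 1) / 2) ≤ -3 := by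
    have h4 : (4 : ℝ) / c ≤ ((s : ℝ) - 1) / 2 := by linarith
    have h5 : (2 : ℝ) ≤ g n * (((s : ℝ) - 1) / 2) := by
      have : (c / 2) * ((4 : ℝ) / c) ≤ g n * (((s : ℝ) - 1) / 2) := by
        apply mul_le_mul hgn h4 (by positivity) hgn0
      have hcc : (c / 2) * ((4 : ℝ) / c) = 2 := by field_simp; ring
      linarith
    have h6 : (2 : ℝ) * (s : ℝ) ≤ g n * ((s : ℝ) * (((s : ℝ) - 1) / 2)) := by
      have := mul_le_mul_of_nonneg_left h5 (by linarith : (0:ℝ) ≤ (s : ℝ))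
      nlinarith
    nlinarith
  -- put everything together
  have hchoose : ((s.choose 2 : ℕ) : ℝ) = (s : ℝ) * ((s : ℝ) - 1) / 2 := Nat.cast_choose_two (K := ℝ) s
  calc (n.choose s : ℝ) * q ^ (s.choose 2)
      ≤ (n : ℝ) ^ s * p ^ (s.choose 2) := by
        apply mul_le_mul
        · exact_mod_cast Nat.choose_le_pow n s
        · exact pow_le_pow_left₀ hq0 hqp _
        · positivity
        · positivity
    _ = (n : ℝ) ^ ((s : ℝ) - g n * ((s : ℝ) * ((s : ℝ) - 1) / 2)) := by
        rw [hp, ← Real.rpow_natCast ((n:ℝ) ^ (-(g n))) (s.choose 2),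
          ← Real.rpow_mul (le_of_lt hn0), ← Real.rpow_natCast (n : ℝ) s,
          ← Real.rpow_add hn0, hchoose]
        ring_nf
    _ ≤ (n : ℝ) ^ (-3 : ℝ) := Real.rpow_le_rpow_of_exponent_le hn1 hexp
end

section
/- Let g : ℕ → ℝ be a nonnegative function such that c := lim_{n→∞} g(n) exists and c > 0, set p(n) := n^{−g(n)}, and let s₀ := 2⌈4/c⌉ + 1. Then there exists N ∈ ℕ such that for all n ≥ N, the expected total number of cliques of size at least 2 in the Erdős–Rényi random graph G(n,p(n)), i.e. E[Σ_{s=2}^{n} K_s(G(n,p(n)))], is at most n^{s₀+1}. -/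
open MeasureTheory
open scoped Classical

instance bernoulliMeasure_prob (p : ℝ) : IsProbabilityMeasure (bernoulliMeasure p) :=
  PMF.toMeasure.isProbabilityMeasure _

instance erdosRenyi_prob (n : ℕ) (p : ℝ) : IsProbabilityMeasure (erdosRenyi n p) := by
  unfold erdosRenyi; infer_instance

lemma completeOn_eq_pi {n : ℕ} (S : Finset (Fin n)) :
    {ω : Sym2 (Fin n) → Bool | IsCompleteOn ω S} =
      Set.pi ↑(S.offDiag.image Sym2.mk.uncurry) (fun _ => {true}) := by
  ext ω
  simp only [Set.mem_setOf_eq, Set.mem_pi, Finset.coe_image, Set.mem_image, Finset.mem_coe,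
    Finset.mem_offDiag, Set.mem_singleton_iff, IsCompleteOn]
  constructor
  · rintro h e ⟨⟨u, v⟩, ⟨hu, hv, huv⟩, rfl⟩
    exact h u hu v hv huv
  · intro h u hu v hv huv
    exact h _ ⟨(u, v), ⟨hu, hv, huv⟩, rfl⟩

lemma measurableSet_completeOn {n : ℕ} (S : Finset (Fin n)) :
    MeasurableSet {ω : Sym2 (Fin n) → Bool | IsCompleteOn ω S} := by
  rw [completeOn_eq_pi]
  exact MeasurableSet.pi (Set.to_countable _) fun e _ => measurableSet_singleton true

lemma measure_completeOn {n : ℕ} (p : ℝ) (S : Finset (Fin n)) :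
    erdosRenyi n p {ω | IsCompleteOn ω S} =
      (min (ENNReal.ofReal p) 1) ^ (S.card.choose 2) := by
  classical
  rw [completeOn_eq_pi, ← Set.univ_pi_ite, erdosRenyi, Measure.pi_pi]
  have h1 : bernoulliMeasure p {true} = min (ENNReal.ofReal p) 1 := by
    rw [bernoulliMeasure, PMF.toMeasure_apply_singleton _ _ (measurableSet_singleton _)]
    show ((min (Real.toNNReal p) 1 : NNReal) : ENNReal) = _
    rw [ENNReal.coe_min, ENNReal.coe_one]
    rfl
  have key : ∀ e : Sym2 (Fin n),
      bernoulliMeasure p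
        (if e ∈ (↑(Finset.image Sym2.mk.uncurry S.offDiag) : Set (Sym2 (Fin n))) then ({true} : Set Bool)
          else Set.univ)
      = if e ∈ Finset.image Sym2.mk.uncurry S.offDiag then min (ENNReal.ofReal p) 1 else 1 := by
    intro e
    by_cases he : e ∈ Finset.image Sym2.mk.uncurry S.offDiag
    · rw [if_pos (Finset.mem_coe.mpr he), if_pos he, h1]
    · rw [if_neg (fun h => he (Finset.mem_coe.mp h)), if_neg he, measure_univ]
  rw [Finset.prod_congr rfl (fun e _ => key e), Finset.prod_ite_mem, Finset.univ_inter,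
    Finset.prod_const, Sym2.card_image_offDiag]

lemma cliqueCount_eq_sum (n s : ℕ) (ω : Sym2 (Fin n) → Bool) :
    (cliqueCount n s ω : ℝ) =
      ∑ S ∈ Finset.powersetCard s (Finset.univ : Finset (Fin n)),
        Set.indicator {ω' | IsCompleteOn ω' S} (fun _ => (1:ℝ)) ω := by
  classical
  have h : Finset.univ.filter (fun S : Finset (Fin n) => S.card = s ∧ IsCompleteOn ω S)
      = (Finset.powersetCard s (Finset.univ : Finset (Fin n))).filter
          fun S => IsCompleteOn ω S := by
    ext S
    simp [Finset.mem_powersetCard, and_comm]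
  rw [cliqueCount, h, Finset.card_filter]
  push_cast
  refine Finset.sum_congr rfl fun S _ => ?_
  rw [Set.indicator_apply]
  by_cases hC : IsCompleteOn ω S <;> simp [hC]

lemma integrable_cliqueCount (n s : ℕ) (p : ℝ) :
    Integrable (fun ω => (cliqueCount n s ω : ℝ)) (erdosRenyi n p) := by
  classical
  simp_rw [cliqueCount_eq_sum n s]
  exact integrable_finset_sum _ fun S _ =>
    (integrable_const (1:ℝ)).indicator (measurableSet_completeOn S)

lemma integral_cliqueCount (n s : ℕ) (p : ℝ) :
    ∫ ω, (cliqueCount n s ω : ℝ) ∂ erdosRenyi n p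
      = (n.choose s : ℝ) * ((min (ENNReal.ofReal p) 1) ^ (s.choose 2)).toReal := by
  classical
  simp_rw [cliqueCount_eq_sum n s]
  rw [integral_finset_sum _ fun S _ =>
    (integrable_const (1:ℝ)).indicator (measurableSet_completeOn S)]
  have h : ∀ S ∈ Finset.powersetCard s (Finset.univ : Finset (Fin n)),
      ∫ ω, Set.indicator {ω' | IsCompleteOn ω' S} (fun _ => (1:ℝ)) ω ∂ erdosRenyi n p
        = ((min (ENNReal.ofReal p) 1) ^ (s.choose 2)).toReal := by
    intro S hS
    rw [MeasureTheory.integral_indicator_const _ (measurableSet_completeOn S),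
      measureReal_def, measure_completeOn, (Finset.mem_powersetCard.mp hS).2]
    simp
  rw [Finset.sum_congr rfl h, Finset.sum_const, Finset.card_powersetCard,
    Finset.card_univ, Fintype.card_fin, nsmul_eq_mul]

lemma term_bound (c : ℝ) (hc : 0 < c) (n s : ℕ) (hn2 : 2 ≤ n) (gn : ℝ)
    (hgn : c/2 ≤ gn) (hs : 2 ≤ s) (m : ℕ) (hm : (4:ℝ)/c ≤ m) :
    (n:ℝ)^s * ((n:ℝ) ^ (-gn)) ^ (s.choose 2) ≤ (n:ℝ) ^ (2*m+1) := by
  have hn0 : (0:ℝ) < n := by positivity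
  have hn1 : (1:ℝ) ≤ n := by exact_mod_cast Nat.one_le_of_lt hn2
  have hgn0 : 0 ≤ gn := le_trans (by positivity) hgn
  have hp0 : (0:ℝ) ≤ (n:ℝ) ^ (-gn) := Real.rpow_nonneg hn0.le _
  have hp1 : (n:ℝ) ^ (-gn) ≤ 1 :=
    Real.rpow_le_one_of_one_le_of_nonpos hn1 (neg_nonpos.mpr hgn0)
  rcases le_or_gt s m with hsm | hms
  · calc (n:ℝ)^s * ((n:ℝ) ^ (-gn)) ^ (s.choose 2)
        ≤ (n:ℝ)^s * 1 :=
          mul_le_mul_of_nonneg_left (pow_le_one₀ hp0 hp1) (by positivity)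
    _ = (n:ℝ)^s := mul_one _
    _ ≤ (n:ℝ) ^ (2*m+1) := pow_le_pow_right₀ hn1 (by omega)
  · have hs1 : (4:ℝ)/c ≤ (s:ℝ) - 1 := by
      have h' : (m:ℝ) ≤ (s:ℝ) - 1 := by
        have h1 : m + 1 ≤ s := hms
        have h2 := Nat.cast_le (α := ℝ).mpr h1
        push_cast at h2 ⊢; linarith
      linarith
    have h4 : (4:ℝ) ≤ c * ((s:ℝ) - 1) := by
      rw [div_le_iff₀ hc] at hs1; linarith [hs1]
    have hkey : (s:ℝ) ≤ gn * (s.choose 2 : ℝ) := by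
      rw [Nat.cast_choose_two]
      have hs2 : (2:ℝ) ≤ (s:ℝ) := by exact_mod_cast hs
      nlinarith [mul_le_mul_of_nonneg_right hgn
        (by nlinarith : (0:ℝ) ≤ (s:ℝ) * ((s:ℝ) - 1) / 2)]
    calc (n:ℝ)^s * ((n:ℝ) ^ (-gn)) ^ (s.choose 2)
        = (n:ℝ) ^ ((s:ℝ) + (-gn) * (s.choose 2 : ℝ)) := by
          rw [Real.rpow_add hn0, Real.rpow_natCast, ← Real.rpow_natCast ((n:ℝ) ^ (-gn)),
            ← Real.rpow_mul hn0.le]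
    _ ≤ (n:ℝ) ^ (0:ℝ) :=
          Real.rpow_le_rpow_of_exponent_le hn1 (by nlinarith)
    _ = 1 := Real.rpow_zero _
    _ ≤ (n:ℝ) ^ (2*m+1) := one_le_pow₀ hn1

/-- If `g ≥ 0` with `lim g = c > 0`, `p(n) = n^{−g(n)}`, and
`s₀ := 2⌈4/c⌉ + 1`, then for all sufficiently large `n`, the expected total number of
cliques of size at least `2` in `G(n, p(n))` is at most `n^{s₀+1}`. -/
theorem erdosRenyi_expected_total_cliqueCount_le
    (c : ℝ) (hc : 0 < c) (g : ℕ → ℝ) (hg : ∀ m, 0 ≤ g m)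
    (hlim : Filter.Tendsto g Filter.atTop (nhds c))
    (s₀ : ℕ) (hs₀ : s₀ = 2 * ⌈(4 : ℝ) / c⌉₊ + 1) :
    ∃ N : ℕ, ∀ n ≥ N,
      ∫ ω, (∑ s ∈ Finset.Icc 2 n, (cliqueCount n s ω : ℝ))
          ∂ erdosRenyi n ((n : ℝ) ^ (-(g n))) ≤
        (n : ℝ) ^ (s₀ + 1) := by
  classical
  obtain ⟨N₀, hN₀⟩ := Filter.eventually_atTop.mp
    (hlim.eventually_const_le (by linarith : c/2 < c))
  refine ⟨max N₀ 2, fun n hn => ?_⟩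
  have hn2 : 2 ≤ n := le_trans (le_max_right _ _) hn
  have hgn : c/2 ≤ g n := hN₀ n (le_trans (le_max_left _ _) hn)
  have hn0 : (0:ℝ) < n := by positivity
  have hn1 : (1:ℝ) ≤ n := by exact_mod_cast Nat.one_le_of_lt hn2
  set p : ℝ := (n:ℝ) ^ (-(g n)) with hp
  have hp0 : 0 ≤ p := Real.rpow_nonneg hn0.le _
  have hp1 : p ≤ 1 :=
    Real.rpow_le_one_of_one_le_of_nonpos hn1 (neg_nonpos.mpr (hg n))
  have hmin : min (ENNReal.ofReal p) 1 = ENNReal.ofReal p :=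
    min_eq_left (ENNReal.ofReal_le_one.mpr hp1)
  rw [integral_finset_sum _ fun s _ => integrable_cliqueCount n s p]
  have hterm : ∀ s ∈ Finset.Icc 2 n,
      ∫ ω, (cliqueCount n s ω : ℝ) ∂ erdosRenyi n p ≤ (n:ℝ) ^ s₀ := by
    intro s hs
    obtain ⟨hs2, hsn⟩ := Finset.mem_Icc.mp hs
    rw [integral_cliqueCount, hmin, ← ENNReal.ofReal_pow hp0,
      ENNReal.toReal_ofReal (pow_nonneg hp0 _)]
    have hchoose : (n.choose s : ℝ) ≤ (n:ℝ)^s := by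
      calc (n.choose s : ℝ) ≤ ((n:ℝ)^s) / (s.factorial : ℝ) := Nat.choose_le_pow_div s n
        _ ≤ (n:ℝ)^s := div_le_self (by positivity)
            (by exact_mod_cast s.factorial_pos)
    calc (n.choose s : ℝ) * p ^ (s.choose 2)
        ≤ (n:ℝ)^s * p ^ (s.choose 2) :=
          mul_le_mul_of_nonneg_right hchoose (pow_nonneg hp0 _)
      _ ≤ (n:ℝ) ^ (2 * ⌈(4:ℝ)/c⌉₊ + 1) :=
          term_bound c hc n s hn2 (g n) hgn hs2 _ (Nat.le_ceil _)
      _ = (n:ℝ) ^ s₀ := by rw [hs₀]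
  calc ∑ s ∈ Finset.Icc 2 n, ∫ ω, (cliqueCount n s ω : ℝ) ∂ erdosRenyi n p
      ≤ ∑ s ∈ Finset.Icc 2 n, (n:ℝ) ^ s₀ := Finset.sum_le_sum hterm
    _ = ((Finset.Icc 2 n).card : ℝ) * (n:ℝ) ^ s₀ := by
        rw [Finset.sum_const, nsmul_eq_mul]
    _ ≤ (n:ℝ) * (n:ℝ) ^ s₀ := by
        refine mul_le_mul_of_nonneg_right ?_ (by positivity)
        rw [Nat.card_Icc]
        exact_mod_cast Nat.le_of_lt_succ (by omega : n + 1 - 2 < n + 1)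
    _ = (n:ℝ) ^ (s₀ + 1) := by rw [pow_succ, mul_comm]
end
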